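/- For ε ∈ (0,1) and integers j ≥ 1 define w_j^{ε}(β) = exp(−β/2^{j+1})·(ε^{3^j} − ε^{3^{j+2}}), θ(ε,j) = (1 − 9ε^{8·3^j})/(1 − ε^{8·3^j}), and β_j^{ε} = 6^j · 2(−log ε) · (log 3 / log 2) · θ(ε,j). Then for every δ > 0 there exists ε_δ ∈ (0,1) such that for every ε with 0 < ε < ε_δ and every integer j₀ ≥ 1, w_{j₀}^{ε}(β_{j₀}^{ε}) > (1−δ) · Σ_{j=1}^{∞} w_j^{ε}(β_{j₀}^{ε}). Equivalently, if (C_j)_{j≥1} is a measurable partition of a measurable space and ℙ_β is a probability measure with ℙ_β(C_j) proportional to w_j^{ε}(β), then ℙ_{β_{j₀}^{ε}}(C_{j₀}) > 1 − δ for every j₀ ≥ 1, provided 0 < ε < ε_δ. -/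

import Mathlib

noncomputable section

/-- The weight `w_j^ε(β) = exp(−β/2^{j+1})·(ε^{3^j} − ε^{3^{j+2}})`. -/
def wfun (ε : ℝ) (j : ℕ) (β : ℝ) : ℝ :=
  Real.exp (-β / 2 ^ (j + 1)) * (ε ^ (3 ^ j) - ε ^ (3 ^ (j + 2)))

/-- `θ(ε,j) = (1 − 9 ε^{8·3^j})/(1 − ε^{8·3^j})`. -/
def thetafun (ε : ℝ) (j : ℕ) : ℝ :=
  (1 - 9 * ε ^ (8 * 3 ^ j)) / (1 - ε ^ (8 * 3 ^ j))

/-- `β_j^ε = 6^j · 2(−log ε) · (log 3/log 2) · θ(ε,j)`. -/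
def betafun (ε : ℝ) (j : ℕ) : ℝ :=
  6 ^ j * (2 * (-Real.log ε)) * (Real.log 3 / Real.log 2) * thetafun ε j

private lemma pow3_ge (k : ℕ) : (2:ℝ) * k + 1 ≤ 3 ^ k := by
  induction k with
  | zero => norm_num
  | succ n ih =>
    rw [pow_succ]
    push_cast
    push_cast at ih
    nlinarith [pow_nonneg (by norm_num : (0:ℝ) ≤ 3) n]

private lemma pow2_ge (k : ℕ) : (k:ℝ) + 1 ≤ 2 ^ k := by
  induction k with
  | zero => norm_num
  | succ n ih =>
    rw [pow_succ]
    push_cast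
    push_cast at ih
    nlinarith [pow_nonneg (by norm_num : (0:ℝ) ≤ 2) n]

private lemma three_pow_ge_three {m : ℕ} (hm : 1 ≤ m) : (3:ℝ) ≤ 3 ^ m := by
  calc (3:ℝ) = 3 ^ 1 := (pow_one 3).symm
  _ ≤ 3 ^ m := pow_le_pow_right₀ (by norm_num) hm

/-- gap lemma, upper side: `i = m + k`. -/
private lemma gapH (a : ℝ) (ha : 27/20 ≤ a) (ha' : a ≤ 8/5) (m k : ℕ)
    (hm : 1 ≤ m) (hk : 1 ≤ k) :
    ((k:ℝ) + 2) ≤ ((6:ℝ)^m * a / 2^(m+k) + 3^(m+k)) - ((6:ℝ)^m * a / 2^m + 3^m) := by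
  have h2m : (0:ℝ) < 2 ^ m := by positivity
  have h2k : (0:ℝ) < 2 ^ k := by positivity
  have h6 : (6:ℝ)^m = 2^m * 3^m := by rw [← mul_pow]; norm_num
  have e1 : (6:ℝ)^m * a / 2^(m+k) = 3^m * (a / 2^k) := by
    rw [h6, pow_add]
    field_simp
  have e2 : (6:ℝ)^m * a / 2^m = 3^m * a := by
    rw [h6]
    field_simp
  rw [e1, e2, pow_add]
  have hp : (3:ℝ) ≤ 3^m := three_pow_ge_three hm
  have hv : (2:ℝ) * k + 1 ≤ 3^k := pow3_ge k
  have hd : (0:ℝ) ≤ 3^m * (a / 2^k) := by positivity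
  have hk1 : (1:ℝ) ≤ (k:ℝ) := by exact_mod_cast hk
  rcases eq_or_lt_of_le hk with hkeq | hk2
  · -- k = 1
    subst hkeq
    have hmul : 3 * (2 - a/2) ≤ 3^m * (2 - a/2) :=
      mul_le_mul_of_nonneg_right hp (by linarith)
    norm_num at hmul ⊢
    nlinarith [hmul]
  · -- k ≥ 2
    have hk2' : (2:ℝ) ≤ (k:ℝ) := by exact_mod_cast hk2
    have hmul : 3 * ((3:ℝ)^k - a - 1) ≤ 3^m * ((3:ℝ)^k - a - 1) :=
      mul_le_mul_of_nonneg_right hp (by nlinarith)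
    nlinarith [hmul, hd, hv]

/-- gap lemma, lower side: the off index is `i`, and `m = i + k`. -/
private lemma gapL (a : ℝ) (ha : 27/20 ≤ a) (i k : ℕ)
    (hi : 1 ≤ i) (hk : 1 ≤ k) :
    ((k:ℝ) + 2) ≤ ((6:ℝ)^(i+k) * a / 2^i + 3^i) - ((6:ℝ)^(i+k) * a / 2^(i+k) + 3^(i+k)) := by
  have h2i : (0:ℝ) < 2 ^ i := by positivity
  have h2k : (0:ℝ) < 2 ^ k := by positivity
  have h6 : (6:ℝ)^(i+k) = 2^i * 2^k * (3^i * 3^k) := by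
    rw [show (6:ℝ) = 2*3 by norm_num, mul_pow, pow_add, pow_add]
  have e1 : (6:ℝ)^(i+k) * a / 2^i = 3^i * (3^k * (2^k * a)) := by
    rw [h6]; field_simp
  have e2 : (6:ℝ)^(i+k) * a / 2^(i+k) = 3^i * (3^k * a) := by
    rw [h6, pow_add]; field_simp
  rw [e1, e2, pow_add]
  have hq : (3:ℝ) ≤ 3^i := three_pow_ge_three hi
  have hv : (2:ℝ) * k + 1 ≤ 3^k := pow3_ge k
  have hu : (k:ℝ) + 1 ≤ 2^k := pow2_ge k
  have hk1 : (1:ℝ) ≤ (k:ℝ) := by exact_mod_cast hk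
  have ha0 : (0:ℝ) ≤ a := by linarith
  -- inner : 3^k*(a*(2^k-1) - 1) + 1 ≥ (2k+1)*((27/20)k - 1) + 1
  have hin1 : (27/20) * k ≤ a * ((2:ℝ)^k - 1) := by
    have : (27/20) * k ≤ (27/20) * ((2:ℝ)^k - 1) := by nlinarith
    nlinarith [this, mul_le_mul_of_nonneg_right ha (by nlinarith : (0:ℝ) ≤ (2:ℝ)^k - 1)]
  have hin2 : ((2:ℝ)*k + 1) * ((27/20)*k - 1) ≤ 3^k * (a * ((2:ℝ)^k - 1) - 1) := by
    have h1 : (0:ℝ) ≤ (27/20)*k - 1 := by nlinarith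
    have := mul_le_mul hv (by linarith : (27/20)*k - 1 ≤ a * ((2:ℝ)^k - 1) - 1) h1
      (by positivity : (0:ℝ) ≤ (3:ℝ)^k)
    linarith
  have hinner : (0:ℝ) ≤ 3^k * (a * ((2:ℝ)^k - 1) - 1) + 1 := by nlinarith
  have hmul : 3 * ((3:ℝ)^k * (a * ((2:ℝ)^k - 1) - 1) + 1)
      ≤ 3^i * ((3:ℝ)^k * (a * ((2:ℝ)^k - 1) - 1) + 1) :=
    mul_le_mul_of_nonneg_right hq hinner
  nlinarith [hmul, hin2, hk1]

private lemma geom_shift_summable (r : ℝ) (h0 : 0 ≤ r) (h1 : r < 1) :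
    Summable (fun i : ℕ => r ^ (i + 3)) := by
  have : (fun i : ℕ => r ^ (i + 3)) = fun i : ℕ => r^3 * r^i := by
    funext i; rw [pow_add]; ring
  rw [this]
  exact (summable_geometric_of_lt_one h0 h1).mul_left _

private lemma geom_shift_tsum (r : ℝ) (h0 : 0 ≤ r) (h1 : r < 1) :
    ∑' i : ℕ, r ^ (i + 3) = r^3 * (1 - r)⁻¹ := by
  have : (fun i : ℕ => r ^ (i + 3)) = fun i : ℕ => r^3 * r^i := by
    funext i; rw [pow_add]; ring
  rw [this, tsum_mul_left, tsum_geometric_of_lt_one h0 h1]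

private lemma geom_refl_sum (r : ℝ) (h0 : 0 ≤ r) (h1 : r < 1) (n : ℕ) :
    ∑ i ∈ Finset.range n, r ^ (n - i + 2) ≤ r^3 * (1 - r)⁻¹ := by
  have e : ∑ i ∈ Finset.range n, r ^ (n - i + 2)
      = ∑ i ∈ Finset.range n, r ^ (i + 3) := by
    rw [← Finset.sum_range_reflect (fun j => r ^ (j + 3)) n]
    refine Finset.sum_congr rfl (fun j hj => ?_)
    have hj' := Finset.mem_range.1 hj
    congr 1
    omega
  rw [e]
  calc ∑ i ∈ Finset.range n, r ^ (i + 3)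
      ≤ ∑' i : ℕ, r ^ (i + 3) :=
        Summable.sum_le_tsum _ (fun i _ => by positivity) (geom_shift_summable r h0 h1)
    _ = r^3 * (1 - r)⁻¹ := geom_shift_tsum r h0 h1

set_option maxHeartbeats 2000000 in
/-- for every `δ > 0` there is `ε_δ ∈ (0,1)` such that for all
`0 < ε < ε_δ` and every `j₀ ≥ 1`, the weight at `j₀` dominates: `w_{j₀}^ε(β_{j₀}^ε)
 > (1−δ)·Σ_{j≥1} w_j^ε(β_{j₀}^ε)`; i.e. any probability measure on a partition
`(C_j)_{j≥1}` with `ℙ_β(C_j) ∝ w_j^ε(β)` satisfies `ℙ_{β_{j₀}^ε}(C_{j₀}) > 1 − δ`. -/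
theorem weight_concentration (δ : ℝ) (hδ : 0 < δ) :
    ∃ εδ : ℝ, 0 < εδ ∧ εδ < 1 ∧ ∀ ε : ℝ, 0 < ε → ε < εδ →
      ∀ j₀ : ℕ, 1 ≤ j₀ →
        (1 - δ) * (∑' j : ℕ, wfun ε (j + 1) (betafun ε j₀)) <
          wfun ε j₀ (betafun ε j₀) := by
  refine ⟨min (1/2) (δ/16), by positivity,
    lt_of_le_of_lt (min_le_left _ _) (by norm_num), ?_⟩
  intro ε hε hεlt j₀ hj₀
  have hε2 : ε < 1/2 := lt_of_lt_of_le hεlt (min_le_left _ _)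
  have hεδ : ε < δ/16 := lt_of_lt_of_le hεlt (min_le_right _ _)
  have hε1 : ε < 1 := by linarith
  set β := betafun ε j₀ with hβ
  have hlog : Real.log ε < 0 := Real.log_neg hε hε1
  have hlog2 : (0:ℝ) < Real.log 2 := Real.log_pos (by norm_num)
  have hc_lo : (3:ℝ)/2 ≤ Real.log 3 / Real.log 2 := by
    rw [le_div_iff₀ hlog2]
    have h := Real.log_le_log (by norm_num : (0:ℝ) < 2^3) (by norm_num : (2:ℝ)^3 ≤ 3^2)
    rw [Real.log_pow, Real.log_pow] at h
    push_cast at h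
    linarith
  have hc_hi : Real.log 3 / Real.log 2 ≤ 8/5 := by
    rw [div_le_iff₀ hlog2]
    have h := Real.log_le_log (by norm_num : (0:ℝ) < 3^5) (by norm_num : (3:ℝ)^5 ≤ 2^8)
    rw [Real.log_pow, Real.log_pow] at h
    push_cast at h
    linarith
  -- smallness of x = ε ^ (8 * 3 ^ j₀)
  have hx0 : (0:ℝ) ≤ ε ^ (8 * 3 ^ j₀) := by positivity
  have hx_small : ε ^ (8 * 3 ^ j₀) ≤ 1/100 := by
    have h24 : 24 ≤ 8 * 3 ^ j₀ := by
      have : 3 ≤ 3 ^ j₀ := by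
        calc 3 = 3^1 := rfl
        _ ≤ 3 ^ j₀ := Nat.pow_le_pow_right (by norm_num) hj₀
      omega
    calc ε ^ (8 * 3 ^ j₀) ≤ ε ^ 24 := pow_le_pow_of_le_one hε.le hε1.le h24
    _ ≤ (1/2 : ℝ) ^ 24 := pow_le_pow_left₀ hε.le hε2.le 24
    _ ≤ 1/100 := by norm_num
  have hθ_hi : thetafun ε j₀ ≤ 1 := by
    rw [thetafun, div_le_one (by linarith)]
    linarith
  have hθ_lo : (9:ℝ)/10 ≤ thetafun ε j₀ := by
    rw [thetafun, le_div_iff₀ (by linarith)]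
    linarith
  set a := Real.log 3 / Real.log 2 * thetafun ε j₀ with ha_def
  have ha_lo : 27/20 ≤ a := by
    have := mul_le_mul hc_lo hθ_lo (by norm_num) (by linarith)
    rw [ha_def]; linarith
  have ha_hi : a ≤ 8/5 := by
    have := mul_le_mul hc_hi hθ_hi (by linarith) (by norm_num)
    rw [ha_def]; linarith
  have hβnn : 0 ≤ β := by
    rw [hβ, betafun]
    have h1 : (0:ℝ) ≤ 6 ^ j₀ := by positivity
    have h2 : (0:ℝ) ≤ 2 * -Real.log ε := by linarith
    have h3 : (0:ℝ) ≤ Real.log 3 / Real.log 2 := by linarith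
    have h4 : (0:ℝ) ≤ thetafun ε j₀ := by linarith
    positivity
  -- the exponent identity
  have hE : ∀ i : ℕ, -β / 2 ^ (i+1) + (3^i : ℕ) * Real.log ε
      = Real.log ε * ((6:ℝ)^j₀ * a / 2^i + 3^i) := by
    intro i
    rw [hβ, betafun, ha_def]
    have h2 : (2:ℝ) ^ (i+1) ≠ 0 := by positivity
    have h2' : (2:ℝ) ^ i ≠ 0 := by positivity
    push_cast
    field_simp
    ring
  -- upper bound for each weight
  have hwle : ∀ i : ℕ, wfun ε i β ≤ Real.exp (Real.log ε * ((6:ℝ)^j₀ * a / 2^i + 3^i)) := by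
    intro i
    rw [wfun]
    have h1 : ε ^ 3 ^ i - ε ^ 3 ^ (i+2) ≤ ε ^ 3 ^ i := by
      nlinarith [pow_nonneg hε.le (3 ^ (i+2))]
    calc Real.exp (-β / 2 ^ (i+1)) * (ε ^ 3 ^ i - ε ^ 3 ^ (i+2))
        ≤ Real.exp (-β / 2 ^ (i+1)) * ε ^ 3 ^ i :=
          mul_le_mul_of_nonneg_left h1 (Real.exp_nonneg _)
      _ = Real.exp (Real.log ε * ((6:ℝ)^j₀ * a / 2^i + 3^i)) := by
          rw [← hE i, Real.exp_add, Real.exp_nat_mul, Real.exp_log hε]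
  -- positivity and the lower bound for the main weight
  have hsplit : ∀ i : ℕ, ε ^ 3 ^ i - ε ^ 3 ^ (i+2) = ε ^ 3 ^ i * (1 - ε ^ (8 * 3 ^ i)) := by
    intro i
    have h9 : 3 ^ (i+2) = 3 ^ i + 8 * 3 ^ i := by ring
    rw [h9, pow_add]
    ring
  have hwnn : ∀ i : ℕ, 0 ≤ wfun ε i β := by
    intro i
    rw [wfun, hsplit i]
    have h1 : ε ^ (8 * 3 ^ i) ≤ 1 := pow_le_one₀ hε.le hε1.le
    exact mul_nonneg (Real.exp_nonneg _)
      (mul_nonneg (pow_nonneg hε.le _) (by linarith))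
  have hwpos : 0 < wfun ε j₀ β := by
    rw [wfun, hsplit j₀]
    have h1 : (0:ℝ) < 1 - ε ^ (8 * 3 ^ j₀) := by linarith
    positivity
  have hwm : Real.exp (Real.log ε * ((6:ℝ)^j₀ * a / 2^j₀ + 3^j₀)) ≤ 2 * wfun ε j₀ β := by
    rw [wfun, hsplit j₀, ← hE j₀, Real.exp_add, Real.exp_nat_mul, Real.exp_log hε]
    have hx1 : (1:ℝ)/2 ≤ 1 - ε ^ (8 * 3 ^ j₀) := by linarith
    have hpos : (0:ℝ) < Real.exp (-β / 2 ^ (j₀+1)) * ε ^ 3 ^ j₀ := by positivity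
    nlinarith [hpos, mul_le_mul_of_nonneg_left hx1 hpos.le]
  -- the key comparison for off indices
  have key : ∀ i k : ℕ, 1 ≤ k → (i = j₀ + k ∨ (i + k = j₀ ∧ 1 ≤ i)) →
      wfun ε i β ≤ 2 * wfun ε j₀ β * ε ^ (k + 2) := by
    intro i k hk hik
    have hgap : ((k:ℝ) + 2) ≤ ((6:ℝ)^j₀ * a / 2^i + 3^i) - ((6:ℝ)^j₀ * a / 2^j₀ + 3^j₀) := by
      rcases hik with h | ⟨h, hi⟩
      · subst h
        exact gapH a ha_lo ha_hi j₀ k hj₀ hk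
      · subst h
        exact gapL a ha_lo i k hi hk
    have hratio : Real.exp (Real.log ε *
        (((6:ℝ)^j₀ * a / 2^i + 3^i) - ((6:ℝ)^j₀ * a / 2^j₀ + 3^j₀))) ≤ ε ^ (k + 2) := by
      have h1 : Real.log ε *
          (((6:ℝ)^j₀ * a / 2^i + 3^i) - ((6:ℝ)^j₀ * a / 2^j₀ + 3^j₀))
          ≤ ((k:ℝ) + 2) * Real.log ε := by
        nlinarith [hgap, hlog]
      refine le_trans (Real.exp_le_exp.2 h1) (le_of_eq ?_)
      rw [show ((k:ℝ) + 2) = ((k + 2 : ℕ) : ℝ) by push_cast; ring,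
        Real.exp_nat_mul, Real.exp_log hε]
    calc wfun ε i β ≤ Real.exp (Real.log ε * ((6:ℝ)^j₀ * a / 2^i + 3^i)) := hwle i
      _ = Real.exp (Real.log ε * ((6:ℝ)^j₀ * a / 2^j₀ + 3^j₀)) *
          Real.exp (Real.log ε *
            (((6:ℝ)^j₀ * a / 2^i + 3^i) - ((6:ℝ)^j₀ * a / 2^j₀ + 3^j₀))) := by
          rw [← Real.exp_add]; ring_nf
      _ ≤ (2 * wfun ε j₀ β) * ε ^ (k + 2) :=
          mul_le_mul hwm hratio (Real.exp_nonneg _) (by positivity)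
  -- summability
  have hbd : ∀ j : ℕ, wfun ε (j+1) β ≤ ε ^ j := by
    intro j
    have hd0 : 0 ≤ ε ^ 3 ^ (j+1) - ε ^ 3 ^ (j+1+2) := by
      rw [hsplit (j+1)]
      have h1 : ε ^ (8 * 3 ^ (j+1)) ≤ 1 := pow_le_one₀ hε.le hε1.le
      exact mul_nonneg (pow_nonneg hε.le _) (by linarith)
    have h1 : ε ^ 3 ^ (j+1) - ε ^ 3 ^ (j+1+2) ≤ ε ^ 3 ^ (j+1) := by
      nlinarith [pow_nonneg hε.le (3 ^ (j+1+2))]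
    have h2 : Real.exp (-β / 2 ^ (j+1+1)) ≤ 1 := by
      rw [Real.exp_le_one_iff]
      have h3 : (0:ℝ) < 2 ^ (j+1+1) := by positivity
      apply div_nonpos_of_nonpos_of_nonneg <;> linarith
    have hj3 : j ≤ 3 ^ (j+1) := by
      have h4 : j < 3 ^ j := Nat.lt_pow_self (by norm_num)
      have h5 : 3 ^ j ≤ 3 ^ (j+1) := Nat.pow_le_pow_right (by norm_num) (Nat.le_succ j)
      omega
    have h3 : ε ^ 3 ^ (j+1) ≤ ε ^ j := pow_le_pow_of_le_one hε.le hε1.le hj3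
    calc wfun ε (j+1) β
        = Real.exp (-β / 2 ^ (j+1+1)) * (ε ^ 3 ^ (j+1) - ε ^ 3 ^ (j+1+2)) := rfl
      _ ≤ 1 * (ε ^ 3 ^ (j+1) - ε ^ 3 ^ (j+1+2)) := mul_le_mul_of_nonneg_right h2 hd0
      _ = ε ^ 3 ^ (j+1) - ε ^ 3 ^ (j+1+2) := one_mul _
      _ ≤ ε ^ 3 ^ (j+1) := h1
      _ ≤ ε ^ j := h3
  have hsumm : Summable (fun j : ℕ => wfun ε (j+1) β) :=
    Summable.of_nonneg_of_le (fun j => hwnn (j+1)) hbd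
      (summable_geometric_of_lt_one hε.le hε1)
  -- decomposition of the series
  obtain ⟨n, rfl⟩ : ∃ n, j₀ = n + 1 := ⟨j₀ - 1, (Nat.succ_pred_eq_of_pos hj₀).symm⟩
  have hdecomp := Summable.sum_add_tsum_nat_add (f := fun j : ℕ => wfun ε (j+1) β) (n+1) hsumm
  have hfin : ∑ i ∈ Finset.range (n+1), wfun ε (i+1) β
      = (∑ i ∈ Finset.range n, wfun ε (i+1) β) + wfun ε (n+1) β :=
    Finset.sum_range_succ _ n
  set w := wfun ε (n+1) β with hw
  have hw0 : 0 ≤ w := hwnn (n+1)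
  -- geometric bounds
  have hinv : (1-ε)⁻¹ ≤ 2 := by
    rw [show (2:ℝ) = (1/2)⁻¹ by norm_num]
    exact inv_anti₀ (by norm_num) (by linarith)
  have hε3 : ε^3 ≤ ε := by
    have h := pow_le_pow_of_le_one hε.le hε1.le (show 1 ≤ 3 by norm_num)
    rwa [pow_one] at h
  have hgeom : ε^3 * (1-ε)⁻¹ ≤ 2*ε := by
    have h := mul_le_mul hε3 hinv (inv_nonneg.2 (by linarith)) hε.le
    linarith
  -- finite part bound
  have hA : ∑ i ∈ Finset.range n, wfun ε (i+1) β ≤ 2 * w * (2*ε) := by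
    have h1 : ∑ i ∈ Finset.range n, wfun ε (i+1) β
        ≤ ∑ i ∈ Finset.range n, 2 * w * ε ^ ((n-i) + 2) := by
      refine Finset.sum_le_sum (fun i hi => ?_)
      have hi' := Finset.mem_range.1 hi
      exact key (i+1) (n-i) (by omega) (Or.inr ⟨by omega, by omega⟩)
    have h2 : ∑ i ∈ Finset.range n, 2 * w * ε ^ ((n-i) + 2)
        = 2 * w * ∑ i ∈ Finset.range n, ε ^ (n - i + 2) := by
      rw [Finset.mul_sum]
    have h3 : ∑ i ∈ Finset.range n, ε ^ (n - i + 2) ≤ ε^3 * (1-ε)⁻¹ :=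
      geom_refl_sum ε hε.le hε1 n
    calc ∑ i ∈ Finset.range n, wfun ε (i+1) β
        ≤ 2 * w * ∑ i ∈ Finset.range n, ε ^ (n - i + 2) := by rw [← h2]; exact h1
      _ ≤ 2 * w * (2*ε) := by
          refine mul_le_mul_of_nonneg_left (le_trans h3 hgeom) (by linarith)
  -- tail bound
  have hB : ∑' i : ℕ, wfun ε ((i + (n+1)) + 1) β ≤ 2 * w * (2*ε) := by
    have hsum1 : Summable (fun i : ℕ => wfun ε ((i + (n+1)) + 1) β) :=
      (summable_nat_add_iff (f := fun j : ℕ => wfun ε (j+1) β) (n+1)).2 hsumm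
    have hsum2 : Summable (fun i : ℕ => 2 * w * ε ^ (i + 3)) :=
      (geom_shift_summable ε hε.le hε1).mul_left _
    have h1 : ∑' i : ℕ, wfun ε ((i + (n+1)) + 1) β ≤ ∑' i : ℕ, 2 * w * ε ^ (i + 3) := by
      refine Summable.tsum_le_tsum (fun i => ?_) hsum1 hsum2
      have := key ((i + (n+1)) + 1) (i+1) (by omega) (Or.inl (by omega))
      calc wfun ε ((i + (n+1)) + 1) β ≤ 2 * w * ε ^ ((i+1) + 2) := this
        _ = 2 * w * ε ^ (i + 3) := by norm_num
    have h2 : ∑' i : ℕ, 2 * w * ε ^ (i + 3) = 2 * w * (ε^3 * (1-ε)⁻¹) := by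
      rw [tsum_mul_left, geom_shift_tsum ε hε.le hε1]
    calc ∑' i : ℕ, wfun ε ((i + (n+1)) + 1) β ≤ ∑' i : ℕ, 2 * w * ε ^ (i + 3) := h1
      _ = 2 * w * (ε^3 * (1-ε)⁻¹) := h2
      _ ≤ 2 * w * (2*ε) := mul_le_mul_of_nonneg_left hgeom (by linarith)
  -- total bound
  have hS_le : (∑' j : ℕ, wfun ε (j+1) β) ≤ w * (1 + 8*ε) := by
    have := hdecomp
    rw [hfin] at this
    have hB' : ∑' (i : ℕ), wfun ε (i + (n + 1) + 1) β ≤ 2 * w * (2*ε) := hB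
    nlinarith [hA, hB', this]
  rcases le_or_gt 1 δ with hδ1 | hδ1
  · have hS0 : 0 ≤ ∑' j : ℕ, wfun ε (j+1) β := tsum_nonneg (fun j => hwnn (j+1))
    have h1 : (1-δ) * (∑' j : ℕ, wfun ε (j+1) β) ≤ 0 :=
      mul_nonpos_of_nonpos_of_nonneg (by linarith) hS0
    calc (1-δ) * (∑' j : ℕ, wfun ε (j+1) β) ≤ 0 := h1
      _ < w := hwpos
  · have h16 : 8*ε < δ := by linarith
    have h2 : (1-δ) * (∑' j : ℕ, wfun ε (j+1) β) ≤ (1-δ) * (w * (1 + 8*ε)) :=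
      mul_le_mul_of_nonneg_left hS_le (by linarith)
    have h3 : (1-δ) * (w * (1 + 8*ε)) < w := by
      have hwp : 0 < w := hwpos
      nlinarith [mul_pos hwp (show (0:ℝ) < δ - 8*ε by linarith),
        mul_nonneg (mul_nonneg hwp.le hδ.le) hε.le]
    linarith
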